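/- Let m ≥ 1, 0 ≤ t ≤ m, and let C_1,…,C_s be m×m matrices over F₂, and denote by c_i^j the j-th row of C_i. Assume that for all choices of nonnegative integers d_1,…,d_s with d_1+…+d_s = m−t, the m−t vectors {c_i^j : 1 ≤ i ≤ s, 1 ≤ j ≤ d_i} are linearly independent over F₂. Then the digital net generated by (C_1,…,C_s) is a (t,m,s)-net over F₂. -/

import Mathlib

open Matrix

/-- The vector of binary digits of `l` (least significant first). -/
def digitsVec (m l : ℕ) : Fin m → ZMod 2 := fun k => if l.testBit k.val then 1 else 0

/-- The map φ sending a bit vector to a real number in [0,1). -/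
noncomputable def phiMap (m : ℕ) (y : Fin m → ZMod 2) : ℝ :=
  ∑ k : Fin m, ((y k).val : ℝ) / 2 ^ (k.val + 1)

/-- The digital net (as a multiset of `2^m` points in `[0,1)^s`) generated by
matrices `C 0, …, C (s-1)`. -/
noncomputable def digitalNet (m s : ℕ) (C : Fin s → Matrix (Fin m) (Fin m) (ZMod 2)) :
    Multiset (Fin s → ℝ) :=
  (Multiset.range (2 ^ m)).map fun l => fun j => phiMap m ((C j).mulVec (digitsVec m l))

open Classical in
/-- `P` is a `(t,m,s)`-net over `F₂`: every elementary interval of volume `2^{t-m}`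
contains exactly `2^t` points of `P`, counted with multiplicity. -/
def IsNet (t m s : ℕ) (P : Multiset (Fin s → ℝ)) : Prop :=
  ∀ d : Fin s → ℕ, (∑ i, d i) = m - t →
    ∀ a : Fin s → ℕ, (∀ i, a i < 2 ^ d i) →
      (P.countP fun x => ∀ i,
        ((a i : ℝ) / 2 ^ d i ≤ x i ∧ x i < ((a i : ℝ) + 1) / 2 ^ d i)) = 2 ^ t

/-- The anti-diagonal matrix `J_m` over `F₂`. -/
def Jmat (m : ℕ) : Matrix (Fin m) (Fin m) (ZMod 2) :=
  Matrix.of fun i j => if i.val + j.val = m - 1 then 1 else 0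

/-- The upper-triangular Pascal matrix `P_m` over `F₂` (0-indexed entry `(i,j)` is
`binom(j,i) mod 2`). -/
def Pmat (m : ℕ) : Matrix (Fin m) (Fin m) (ZMod 2) :=
  Matrix.of fun i j => ((j.val.choose i.val : ℕ) : ZMod 2)

/-- A matrix is lower triangular. -/
def IsLowerTri {m : ℕ} (L : Matrix (Fin m) (Fin m) (ZMod 2)) : Prop :=
  ∀ i j : Fin m, i < j → L i j = 0

/-! ### Auxiliary lemmas -/

lemma sum_two_pow' (n : ℕ) : ∑ j ∈ Finset.range n, 2^j = 2^n - 1 := by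
  induction n with
  | zero => simp
  | succ n ih =>
    rw [Finset.sum_range_succ, ih, pow_succ]
    have := Nat.one_le_two_pow (n := n)
    omega

lemma revsum_lt' (n : ℕ) (ε : ℕ → ℕ) (hε : ∀ j, ε j ≤ 1) :
    ∑ j ∈ Finset.range n, ε j * 2^(n-1-j) < 2^n := by
  have h1 : ∑ j ∈ Finset.range n, ε j * 2^(n-1-j) ≤ ∑ j ∈ Finset.range n, 2^(n-1-j) := by
    apply Finset.sum_le_sum
    intro j _
    calc ε j * 2^(n-1-j) ≤ 1 * 2^(n-1-j) := Nat.mul_le_mul_right _ (hε j)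
    _ = 2^(n-1-j) := one_mul _
  have h2 : ∑ j ∈ Finset.range n, 2^(n-1-j) = ∑ j ∈ Finset.range n, 2^j :=
    Finset.sum_range_reflect (fun j => 2^j) n
  have h3 := sum_two_pow' n
  have := Nat.one_le_two_pow (n := n)
  omega

/-- digit sum, most significant first -/
def dsum {d : ℕ} (c : Fin d → ZMod 2) : ℕ := ∑ j, (c j).val * 2^(d-1-j.val)

lemma dsum_eq_equiv {d : ℕ} (c : Fin d → ZMod 2) :
    dsum c = (finFunctionFinEquiv (fun i => (⟨(c i.rev).val, ZMod.val_lt _⟩ : Fin 2)) : ℕ) := by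
  rw [finFunctionFinEquiv_apply, dsum]
  refine (Fintype.sum_bijective Fin.rev Fin.rev_bijective _ _ (fun x => ?_)).symm
  have hx : d - 1 - (d - (x.val + 1)) = x.val := by omega
  simp [Fin.rev_rev, Fin.val_rev, hx]

lemma dsum_lt {d : ℕ} (c : Fin d → ZMod 2) : dsum c < 2^d := by
  rw [dsum_eq_equiv]
  exact (finFunctionFinEquiv _).isLt

lemma dsum_inj {d : ℕ} : Function.Injective (dsum (d := d)) := by
  intro c c' hcc
  rw [dsum_eq_equiv, dsum_eq_equiv] at hcc
  have h2 := finFunctionFinEquiv.injective (Fin.val_injective hcc)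
  funext j
  have h3 := congrFun h2 j.rev
  simp only [Fin.rev_rev, Fin.mk.injEq] at h3
  exact ZMod.val_injective 2 h3

lemma dsum_surj {d : ℕ} (a : ℕ) (ha : a < 2^d) : ∃ c : Fin d → ZMod 2, dsum c = a := by
  refine ⟨fun j => (((finFunctionFinEquiv.symm ⟨a, ha⟩ j.rev : Fin 2) : ℕ) : ZMod 2), ?_⟩
  rw [dsum_eq_equiv]
  have : (fun i => (⟨(((((finFunctionFinEquiv.symm ⟨a, ha⟩ (Fin.rev i).rev : Fin 2) : ℕ) : ZMod 2)).val), ZMod.val_lt _⟩ : Fin 2))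
      = finFunctionFinEquiv.symm ⟨a, ha⟩ := by
    funext i
    apply Fin.ext
    simp only [Fin.rev_rev]
    exact ZMod.val_cast_of_lt (finFunctionFinEquiv.symm ⟨a, ha⟩ i).isLt
  rw [this, Equiv.apply_symm_apply]

/-- encode a bit vector as a natural number, least significant first -/
def enc {m : ℕ} (b : Fin m → ZMod 2) : ℕ := ∑ k, (b k).val * 2^(k.val)

lemma enc_eq {m : ℕ} (b : Fin m → ZMod 2) :
    enc b = (finFunctionFinEquiv (fun i => (⟨(b i).val, ZMod.val_lt _⟩ : Fin 2)) : ℕ) := by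
  rw [finFunctionFinEquiv_apply]; rfl

lemma enc_lt {m : ℕ} (b : Fin m → ZMod 2) : enc b < 2^m := by
  rw [enc_eq]; exact (finFunctionFinEquiv _).isLt

lemma zmod2_of_val_cases (c : ZMod 2) : (c.val = 0 ∧ c = 0) ∨ (c.val = 1 ∧ c = 1) := by
  have h := ZMod.val_lt c
  have h2 : ((c.val : ℕ) : ZMod 2) = c := ZMod.natCast_rightInverse c
  interval_cases hv : c.val
  · left; exact ⟨rfl, by rw [← h2]; simp⟩
  · right; exact ⟨rfl, by rw [← h2]; simp⟩

lemma enc_div_mod {m : ℕ} (b : Fin m → ZMod 2) (k : Fin m) :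
    enc b / 2^(k.val) % 2 = (b k).val := by
  have h : (fun i => (⟨(b i).val, ZMod.val_lt _⟩ : Fin 2))
      = finFunctionFinEquiv.symm (finFunctionFinEquiv (fun i => (⟨(b i).val, ZMod.val_lt _⟩ : Fin 2))) :=
    (Equiv.symm_apply_apply _ _).symm
  have h2 := congrFun h k
  have h3 : (finFunctionFinEquiv.symm (finFunctionFinEquiv
      (fun i => (⟨(b i).val, ZMod.val_lt _⟩ : Fin 2))) k : ℕ)
      = (finFunctionFinEquiv (fun i => (⟨(b i).val, ZMod.val_lt _⟩ : Fin 2)) : ℕ) / 2^(k.val) % 2 := rfl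
  have h4 := congrArg Fin.val h2
  rw [h3] at h4
  rw [enc_eq]
  exact h4.symm

lemma digitsVec_enc {m : ℕ} (b : Fin m → ZMod 2) : digitsVec m (enc b) = b := by
  funext k
  unfold digitsVec
  rw [Nat.testBit_eq_decide_div_mod_eq, enc_div_mod]
  rcases zmod2_of_val_cases (b k) with ⟨hv, he⟩ | ⟨hv, he⟩ <;> simp [hv, he, ZMod.val_one]

lemma enc_digitsVec {m l : ℕ} (hl : l < 2^m) : enc (digitsVec m l) = l := by
  rw [enc_eq]
  have h : (fun i : Fin m => (⟨(digitsVec m l i).val, ZMod.val_lt _⟩ : Fin 2))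
      = finFunctionFinEquiv.symm ⟨l, hl⟩ := by
    funext i
    apply Fin.ext
    have h3 : ((finFunctionFinEquiv.symm ⟨l, hl⟩ i : Fin 2) : ℕ) = l / 2^(i.val) % 2 := rfl
    rw [h3]
    show (digitsVec m l i).val = l / 2^(i.val) % 2
    unfold digitsVec
    rw [Nat.testBit_eq_decide_div_mod_eq]
    have h4 : l / 2^(i.val) % 2 < 2 := Nat.mod_lt _ (by norm_num)
    by_cases hc : l / 2^(i.val) % 2 = 1
    · simp [hc, ZMod.val_one]
    · simp [hc]
      omega
  rw [h, Equiv.apply_symm_apply]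

lemma phi_eq (m : ℕ) (y : Fin m → ZMod 2) :
    phiMap m y = ((∑ k : Fin m, (y k).val * 2^(m-1-k.val) : ℕ) : ℝ) / 2^m := by
  unfold phiMap
  push_cast
  rw [Finset.sum_div]
  apply Finset.sum_congr rfl
  intro k _
  have hk : (m-1-k.val) + (k.val+1) = m := by omega
  rw [div_eq_div_iff (by positivity) (by positivity), mul_assoc, ← pow_add, hk]

lemma phi_mem_iff {m d a : ℕ} (hd : d ≤ m) (ha : a < 2^d) (y : Fin m → ZMod 2) :
    ((a:ℝ)/2^d ≤ phiMap m y ∧ phiMap m y < ((a:ℝ)+1)/2^d) ↔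
    (∑ j : Fin d, (y (Fin.castLE hd j)).val * 2^(d-1-j.val)) = a := by
  set N : ℕ := ∑ k : Fin m, (y k).val * 2^(m-1-k.val) with hN
  set A : ℕ := ∑ j : Fin d, (y (Fin.castLE hd j)).val * 2^(d-1-j.val) with hA
  set q : ℕ := 2^(m-d) with hq
  have hqpos : 0 < q := Nat.pow_pos (by norm_num)
  set f : ℕ → ℕ := fun k => if h : k < m then (y ⟨k,h⟩).val * 2^(m-1-k) else 0 with hf
  have hNf : N = ∑ k ∈ Finset.range m, f k := by
    rw [hN, ← Fin.sum_univ_eq_sum_range f m]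
    apply Finset.sum_congr rfl
    intro k _
    rw [hf]
    simp [k.isLt]
  set B : ℕ := ∑ k ∈ Finset.Ico d m, f k with hB
  have hsplit : N = A * q + B := by
    rw [hNf, ← Finset.sum_range_add_sum_Ico f hd, ← hB]
    congr 1
    rw [hA, Finset.sum_mul, ← Fin.sum_univ_eq_sum_range (fun k => f k) d]
    apply Finset.sum_congr rfl
    intro j _
    rw [hf]
    have hjm : (j : ℕ) < m := lt_of_lt_of_le j.isLt hd
    have hexp : (d-1-j.val) + (m-d) = m-1-j.val := by omega
    simp only [hjm, dif_pos]
    rw [mul_assoc, ← pow_add, hexp]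
    rfl
  have hBlt : B < q := by
    rw [hB, Finset.sum_Ico_eq_sum_range]
    have heq : ∀ j ∈ Finset.range (m-d), f (d+j) =
        (fun j => if h : d + j < m then (y ⟨d+j,h⟩).val else 0) j * 2^((m-d)-1-j) := by
      intro j hj
      rw [Finset.mem_range] at hj
      have hdm : d + j < m := by omega
      have hexp2 : m - 1 - (d + j) = (m-d)-1-j := by omega
      rw [hf]
      simp only [hdm, dif_pos, hexp2]
    rw [Finset.sum_congr rfl heq]
    exact revsum_lt' (m-d) _ (fun j => by
      by_cases hc : d + j < m
      · simpa [hc] using Nat.lt_succ_iff.mp (ZMod.val_lt (y ⟨d+j,hc⟩))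
      · simp [hc])
  rw [phi_eq, ← hN]
  have h2d : (0:ℝ) < 2^d := by positivity
  have h2m : (0:ℝ) < 2^m := by positivity
  have hqd : ((2:ℝ))^m = q * 2^d := by
    rw [hq]
    push_cast
    rw [← pow_add]
    congr 1
    omega
  have hle : ((a:ℝ)/2^d ≤ (N:ℝ)/2^m) ↔ a * q ≤ N := by
    rw [div_le_div_iff₀ h2d h2m, hqd]
    constructor
    · intro hx
      have h5 : (a:ℝ) * q ≤ N := le_of_mul_le_mul_right (by nlinarith) h2d
      exact_mod_cast h5
    · intro hx
      have h5 : ((a * q : ℕ) : ℝ) ≤ (N:ℝ) := by exact_mod_cast hx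
      push_cast at h5
      nlinarith
  have hlt : ((N:ℝ)/2^m < ((a:ℝ)+1)/2^d) ↔ N < (a+1) * q := by
    rw [div_lt_div_iff₀ h2m h2d, hqd]
    constructor
    · intro hx
      have h5 : (N:ℝ) < ((a:ℝ)+1) * q := lt_of_mul_lt_mul_right (by nlinarith) (le_of_lt h2d)
      have h6 : (N:ℝ) < (((a+1) * q : ℕ) : ℝ) := by push_cast; linarith
      exact_mod_cast h6
    · intro hx
      have h5 : (N:ℝ) < (((a+1) * q : ℕ) : ℝ) := by exact_mod_cast hx
      push_cast at h5
      nlinarith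
  rw [hle, hlt, hsplit]
  have e1 : (A+1) * q = A * q + q := by ring
  have e2 : (a+1) * q = a * q + q := by ring
  constructor
  · rintro ⟨h1, h2⟩
    have hAa : A < a + 1 := by
      have h3 : A * q < (a+1) * q := by omega
      exact lt_of_mul_lt_mul_right h3 (Nat.zero_le q)
    have haA : a < A + 1 := by
      have h3 : a * q < (A+1) * q := by omega
      exact lt_of_mul_lt_mul_right h3 (Nat.zero_le q)
    omega
  · intro hEq
    rw [hEq]
    omega

theorem stmt2 (m t s : ℕ) (hm : 1 ≤ m) (ht : t ≤ m)
    (C : Fin s → Matrix (Fin m) (Fin m) (ZMod 2))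
    (h : ∀ d : Fin s → ℕ, (∑ i, d i) = m - t →
      LinearIndependent (ZMod 2)
        (fun p : {p : Fin s × Fin m // p.2.val < d p.1} => C p.1.1 p.1.2)) :
    IsNet t m s (digitalNet m s C) := by
  classical
  intro d hd a ha
  have hdm : ∀ i, d i ≤ m := by
    intro i
    have h1 : d i ≤ ∑ j, d j := Finset.single_le_sum (fun j _ => Nat.zero_le _) (Finset.mem_univ i)
    omega
  set ι := {p : Fin s × Fin m // p.2.val < d p.1} with hι
  set M : Matrix ι (Fin m) (ZMod 2) := fun p => C p.1.1 p.1.2 with hMdef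
  have hM : LinearIndependent (ZMod 2) (fun p : ι => M p) := h d hd
  have hcard : Fintype.card ι = m - t := by
    have e : ι ≃ Σ i : Fin s, Fin (d i) :=
      { toFun := fun p => ⟨p.1.1, ⟨p.1.2.val, p.2⟩⟩
        invFun := fun q => ⟨(q.1, ⟨q.2.val, lt_of_lt_of_le q.2.isLt (hdm q.1)⟩), q.2.isLt⟩
        left_inv := fun p => rfl
        right_inv := fun q => rfl }
    rw [Fintype.card_congr e, Fintype.card_sigma]
    simp [hd]
  set T : (Fin m → ZMod 2) →ₗ[ZMod 2] (ι → ZMod 2) := M.mulVecLin with hT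
  have hrank : Module.finrank (ZMod 2) (LinearMap.range T) = Fintype.card ι := hM.rank_matrix
  have hTsurj : Function.Surjective T := by
    rw [← LinearMap.range_eq_top]
    apply Submodule.eq_top_of_finrank_eq
    rw [hrank, Module.finrank_fintype_fun_eq_card]
  have hc : ∀ i, ∃ c : Fin (d i) → ZMod 2, dsum c = a i := fun i => dsum_surj (a i) (ha i)
  choose c hcspec using hc
  set w : ι → ZMod 2 := fun p => c p.1.1 ⟨p.1.2.val, p.2⟩ with hw
  have hkey : ∀ b : Fin m → ZMod 2,
      ((∀ i, ((a i : ℝ) / 2 ^ (d i) ≤ phiMap m ((C i).mulVec b) ∧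
        phiMap m ((C i).mulVec b) < ((a i : ℝ) + 1) / 2 ^ (d i))) ↔ T b = w) := by
    intro b
    constructor
    · intro hb
      funext p
      have h1 := (phi_mem_iff (hdm p.1.1) (ha p.1.1) ((C p.1.1).mulVec b)).mp (hb p.1.1)
      have h2 : (fun j : Fin (d p.1.1) => ((C p.1.1).mulVec b) (Fin.castLE (hdm p.1.1) j))
          = c p.1.1 := by
        apply dsum_inj
        rw [hcspec]
        exact h1
      have h3 := congrFun h2 ⟨p.1.2.val, p.2⟩
      have hcast : Fin.castLE (hdm p.1.1) (⟨p.1.2.val, p.2⟩ : Fin (d p.1.1)) = p.1.2 :=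
        Fin.ext rfl
      rw [hcast] at h3
      exact h3
    · intro hb i
      apply (phi_mem_iff (hdm i) (ha i) ((C i).mulVec b)).mpr
      rw [← hcspec i]
      have h2 : (fun j : Fin (d i) => ((C i).mulVec b) (Fin.castLE (hdm i) j)) = c i := by
        funext j
        have h4 := congrFun hb ⟨(i, Fin.castLE (hdm i) j), j.isLt⟩
        have hj : (⟨(Fin.castLE (hdm i) j).val, j.isLt⟩ : Fin (d i)) = j := Fin.ext rfl
        have h5 : w ⟨(i, Fin.castLE (hdm i) j), j.isLt⟩ = c i j := by
          rw [hw]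
          exact congrArg (c i) hj
        rw [h5] at h4
        exact h4
      show dsum _ = dsum (c i)
      exact congrArg dsum h2
  unfold digitalNet
  rw [Multiset.countP_map]
  have hfc : Multiset.filter
      (fun l => ∀ i, ((a i : ℝ) / 2 ^ (d i) ≤ phiMap m ((C i).mulVec (digitsVec m l)) ∧
        phiMap m ((C i).mulVec (digitsVec m l)) < ((a i : ℝ) + 1) / 2 ^ (d i)))
      (Multiset.range (2^m))
      = Multiset.filter (fun l => T (digitsVec m l) = w) (Multiset.range (2^m)) :=
    Multiset.filter_congr (fun l _ => by
      constructor
      · intro hx; exact (hkey (digitsVec m l)).mp hx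
      · intro hx; exact (hkey (digitsVec m l)).mpr hx)
  rw [hfc]
  have hfin : (Multiset.filter (fun l => T (digitsVec m l) = w) (Multiset.range (2^m))).card
      = ((Finset.range (2^m)).filter (fun l => T (digitsVec m l) = w)).card := by
    rfl
  rw [hfin]
  have hbij : ((Finset.range (2^m)).filter (fun l => T (digitsVec m l) = w)).card
      = (Finset.univ.filter (fun b : Fin m → ZMod 2 => T b = w)).card := by
    apply Finset.card_bij' (fun l _ => digitsVec m l) (fun b _ => enc b)
    · intro l hl
      rw [Finset.mem_filter] at hl ⊢
      exact ⟨Finset.mem_univ _, hl.2⟩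
    · intro b hb
      rw [Finset.mem_filter] at hb ⊢
      refine ⟨Finset.mem_range.mpr (enc_lt b), ?_⟩
      rw [digitsVec_enc]
      exact hb.2
    · intro l hl
      rw [Finset.mem_filter, Finset.mem_range] at hl
      exact enc_digitsVec hl.1
    · intro b _
      exact digitsVec_enc b
  rw [hbij]
  obtain ⟨b0, hb0⟩ := hTsurj w
  have e2 : {b : Fin m → ZMod 2 // T b = w} ≃ {b : Fin m → ZMod 2 // T b = 0} :=
    { toFun := fun x => ⟨x.1 - b0, by rw [map_sub, x.2, hb0, sub_self]⟩
      invFun := fun k => ⟨k.1 + b0, by rw [map_add, k.2, hb0, zero_add]⟩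
      left_inv := fun x => Subtype.ext (by simp)
      right_inv := fun k => Subtype.ext (by simp) }
  have e3 : {b : Fin m → ZMod 2 // T b = 0} ≃ LinearMap.ker T :=
    Equiv.subtypeEquivRight (fun b => (LinearMap.mem_ker (f := T)).symm)
  have hcard2 : (Finset.univ.filter (fun b : Fin m → ZMod 2 => T b = w)).card
      = Fintype.card (LinearMap.ker T) := by
    rw [← Fintype.card_subtype]
    exact Fintype.card_congr (e2.trans e3)
  rw [hcard2]
  have hrk : Module.finrank (ZMod 2) (LinearMap.ker T) = t := by
    have h1 := LinearMap.finrank_range_add_finrank_ker T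
    rw [hrank, hcard, Module.finrank_fintype_fun_eq_card, Fintype.card_fin] at h1
    omega
  have := Module.card_eq_pow_finrank (K := ZMod 2) (V := LinearMap.ker T)
  rw [ZMod.card, hrk] at this
  exact this
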